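/- Let σ, ω₁,…,ω_E be random variables on {0,…,β}, each symmetric about β/2, with P(σ = s) = (1/L)·Σ_e ℓ_e P(ω_e = s) for positive weights ℓ_e summing to L. Let ε = sqrt(max_e Var(ω_e) / min_e Var(ω_e)) − 1, and assume min_e Var(ω_e) > 0. Then d_KS(σ, N(σ)) ≤ max_e d_KS(ω_e, N(ω_e)) + ε, where N(X) denotes a Gaussian random variable with the same mean and variance as X. -/

import Mathlib

open MeasureTheory ProbabilityTheory Set

/-- The Kolmogorov–Smirnov distance between the distribution of a random variable `X`
(on a probability space `(Ω, P)`) and the Gaussian measure `ν` on `ℝ`. -/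
noncomputable def dKSGauss {Ω : Type*} [MeasurableSpace Ω] (P : Measure Ω)
    (X : Ω → ℝ) (ν : Measure ℝ) : ℝ :=
  ⨆ t : ℝ, |(P {x | X x ≤ t}).toReal - (ν (Set.Iic t)).toReal|

/-- The Gaussian (normal) random variable `N(X)` with the same mean and variance as `X`,
represented by its distribution. -/
noncomputable def gaussOf {Ω : Type*} [MeasurableSpace Ω] (P : Measure Ω)
    (X : Ω → ℝ) : Measure ℝ :=
  gaussianReal (∫ x, X x ∂P) (Real.toNNReal (variance X P))

section Aux
set_option linter.unreachableTactic false
set_option linter.unusedTactic false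

noncomputable def stdΦ (u : ℝ) : ℝ := (gaussianReal 0 1 (Set.Iic u)).toReal

lemma stdpdf_eq (x : ℝ) : gaussianPDFReal 0 1 x = (Real.sqrt (2 * Real.pi))⁻¹ * Real.exp (- x ^ 2 / 2) := by
  simp [gaussianPDFReal]

lemma stdpdf_le {c x : ℝ} (h : c ^ 2 ≤ x ^ 2) : gaussianPDFReal 0 1 x ≤ gaussianPDFReal 0 1 c := by
  rw [stdpdf_eq, stdpdf_eq]
  gcongr <;> linarith

lemma mul_stdpdf_le {y : ℝ} (hy : 0 ≤ y) : y * gaussianPDFReal 0 1 y ≤ 1 := by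
  rw [stdpdf_eq]
  have h1 : y ≤ Real.exp (y ^ 2 / 2) := by
    calc y ≤ 1 + y ^ 2 / 2 := by nlinarith [sq_nonneg (y - 1)]
    _ ≤ Real.exp (y ^ 2 / 2) := by
        have := Real.add_one_le_exp (y ^ 2 / 2); linarith
  have h2 : (Real.sqrt (2 * Real.pi))⁻¹ ≤ 1 := by
    rw [inv_le_one_iff₀]
    right
    rw [show (1:ℝ) = Real.sqrt 1 by simp]
    exact Real.sqrt_le_sqrt (by nlinarith [Real.pi_gt_three])
  have h3 : Real.exp (- y ^ 2 / 2) = (Real.exp (y ^ 2 / 2))⁻¹ := by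
    rw [← Real.exp_neg]; ring_nf
  calc y * ((Real.sqrt (2 * Real.pi))⁻¹ * Real.exp (- y ^ 2 / 2))
      ≤ y * (1 * Real.exp (- y ^ 2 / 2)) := by
        gcongr
    _ = y * (Real.exp (y ^ 2 / 2))⁻¹ := by rw [one_mul, h3]
    _ ≤ Real.exp (y ^ 2 / 2) * (Real.exp (y ^ 2 / 2))⁻¹ := by
        gcongr
    _ = 1 := mul_inv_cancel₀ (Real.exp_ne_zero _)

lemma gauss_cdf_eq (m : ℝ) {v : ℝ} (hv : 0 < v) (t : ℝ) :
    (gaussianReal m v.toNNReal (Set.Iic t)).toReal = stdΦ ((t - m) / Real.sqrt v) := by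
  have hs : (0:ℝ) < Real.sqrt v := Real.sqrt_pos.2 hv
  have h1 : (gaussianReal 0 1).map (fun x => Real.sqrt v * x) = gaussianReal 0 v.toNNReal := by
    have := gaussianReal_map_const_mul (μ := 0) (v := 1) (Real.sqrt v)
    simp only [mul_zero] at this
    convert this using 2
    ext
    simp [Real.sq_sqrt hv.le, Real.coe_toNNReal _ hv.le]
  have h2 : (gaussianReal 0 v.toNNReal).map (· + m) = gaussianReal m v.toNNReal := by
    simpa using gaussianReal_map_add_const (μ := 0) (v := v.toNNReal) m
  have h3 : (gaussianReal 0 1).map (fun x => Real.sqrt v * x + m) = gaussianReal m v.toNNReal := by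
    rw [← h2, ← h1, Measure.map_map (by fun_prop) (by fun_prop)]
    rfl
  rw [← h3, Measure.map_apply (by fun_prop) measurableSet_Iic]
  have : (fun x => Real.sqrt v * x + m) ⁻¹' Set.Iic t = Set.Iic ((t - m) / Real.sqrt v) := by
    ext x
    simp only [Set.mem_preimage, Set.mem_Iic, le_div_iff₀ hs]
    constructor <;> intro h <;> nlinarith
  rw [this, stdΦ]

lemma stdΦ_diff {a b : ℝ} (hab : a ≤ b) :
    stdΦ b - stdΦ a = (gaussianReal 0 1 (Set.Ioc a b)).toReal := by
  have h : Set.Iic a ∪ Set.Ioc a b = Set.Iic b := Set.Iic_union_Ioc_eq_Iic hab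
  have hd : Disjoint (Set.Iic a) (Set.Ioc a b) := Set.Iic_disjoint_Ioc le_rfl
  have := measure_union (μ := gaussianReal 0 1) hd measurableSet_Ioc
  rw [h] at this
  rw [stdΦ, stdΦ, this, ENNReal.toReal_add (measure_ne_top _ _) (measure_ne_top _ _)]
  ring

lemma meas_Ioc_le {a b c : ℝ} (hab : a ≤ b)
    (h : ∀ x ∈ Set.Ioc a b, gaussianPDFReal 0 1 x ≤ gaussianPDFReal 0 1 c) :
    (gaussianReal 0 1 (Set.Ioc a b)).toReal ≤ (b - a) * gaussianPDFReal 0 1 c := by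
  rw [gaussianReal_apply_eq_integral 0 one_ne_zero,
    ENNReal.toReal_ofReal (integral_nonneg fun x => gaussianPDFReal_nonneg 0 1 x)]
  have hint : ∫ x in Set.Ioc a b, gaussianPDFReal 0 1 x
      ≤ ∫ _x in Set.Ioc a b, gaussianPDFReal 0 1 c := by
    apply setIntegral_mono_on
    · exact (integrable_gaussianPDFReal 0 1).integrableOn
    · exact integrableOn_const (by simp [hab])
    · exact measurableSet_Ioc
    · exact h
  refine hint.trans ?_
  rw [setIntegral_const]
  simp [Real.volume_Ioc, ENNReal.toReal_ofReal (sub_nonneg.2 hab), max_eq_left (sub_nonneg.2 hab)]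
lemma stdpdf_even (y : ℝ) : gaussianPDFReal 0 1 (-y) = gaussianPDFReal 0 1 y := by
  simp [gaussianPDFReal]

lemma core_bound {s1 s2 : ℝ} (h1 : 0 < s1) (h12 : s1 ≤ s2) (r : ℝ) :
    |stdΦ (r / s1) - stdΦ (r / s2)| ≤ s2 / s1 - 1 := by
  have h2 : (0:ℝ) < s2 := h1.trans_le h12
  rcases le_or_gt 0 r with hr | hr
  · -- 0 ≤ r : r/s2 ≤ r/s1, both ≥ 0
    set a := r / s2 with ha
    set b := r / s1 with hb
    have hab : a ≤ b := by
      apply div_le_div_of_nonneg_left hr h1 h12 |>.trans_eq rfl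
    have ha0 : 0 ≤ a := div_nonneg hr h2.le
    have hdiff := stdΦ_diff hab
    have hnn : 0 ≤ stdΦ b - stdΦ a := by rw [hdiff]; positivity
    rw [abs_of_nonneg hnn, hdiff]
    have hbd := meas_Ioc_le hab (c := a) (fun x hx => stdpdf_le (by nlinarith [hx.1, hx.2]))
    refine hbd.trans ?_
    have key : (b - a) * gaussianPDFReal 0 1 a = (s2 / s1 - 1) * (a * gaussianPDFReal 0 1 a) := by
      rw [hb, ha]; field_simp
    rw [key]
    calc (s2 / s1 - 1) * (a * gaussianPDFReal 0 1 a)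
        ≤ (s2 / s1 - 1) * 1 := by
          apply mul_le_mul_of_nonneg_left (mul_stdpdf_le ha0)
          have : (1:ℝ) ≤ s2 / s1 := (one_le_div h1).2 h12
          linarith
      _ = s2 / s1 - 1 := mul_one _
  · -- r < 0 : r/s1 ≤ r/s2 ≤ 0
    set a := r / s1 with ha
    set b := r / s2 with hb
    have hab : a ≤ b := by
      rw [ha, hb, div_le_div_iff₀ h1 h2]
      nlinarith
    have hb0 : b ≤ 0 := div_nonpos_of_nonpos_of_nonneg hr.le h2.le
    have hdiff := stdΦ_diff hab
    have hnn : 0 ≤ stdΦ b - stdΦ a := by rw [hdiff]; positivity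
    rw [abs_sub_comm, abs_of_nonneg hnn, hdiff]
    have hbd := meas_Ioc_le hab (c := b) (fun x hx => stdpdf_le (by nlinarith [hx.1, hx.2]))
    refine hbd.trans ?_
    have key : (b - a) * gaussianPDFReal 0 1 b
        = (s2 / s1 - 1) * ((-b) * gaussianPDFReal 0 1 (-b)) := by
      rw [stdpdf_even, hb, ha]; field_simp; ring
    rw [key]
    calc (s2 / s1 - 1) * ((-b) * gaussianPDFReal 0 1 (-b))
        ≤ (s2 / s1 - 1) * 1 := by
          apply mul_le_mul_of_nonneg_left (mul_stdpdf_le (by linarith))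
          have : (1:ℝ) ≤ s2 / s1 := (one_le_div h1).2 h12
          linarith
      _ = s2 / s1 - 1 := mul_one _
lemma gauss_pair_le {m t u v : ℝ} (hu : 0 < u) (huv : u ≤ v) {lo hi : ℝ} (hlo : 0 < lo)
    (h1 : lo ≤ u) (h2 : v ≤ hi) :
    |(gaussianReal m u.toNNReal (Set.Iic t)).toReal
      - (gaussianReal m v.toNNReal (Set.Iic t)).toReal| ≤ Real.sqrt (hi / lo) - 1 := by
  have hv : 0 < v := hu.trans_le huv
  rw [gauss_cdf_eq m hu t, gauss_cdf_eq m hv t]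
  have hs1 : 0 < Real.sqrt u := Real.sqrt_pos.2 hu
  have hs12 : Real.sqrt u ≤ Real.sqrt v := Real.sqrt_le_sqrt huv
  refine (core_bound hs1 hs12 (t - m)).trans ?_
  have hq : Real.sqrt v / Real.sqrt u = Real.sqrt (v / u) := (Real.sqrt_div hv.le u).symm
  rw [hq]
  have : Real.sqrt (v / u) ≤ Real.sqrt (hi / lo) :=
    Real.sqrt_le_sqrt (div_le_div₀ (le_trans hv.le h2) h2 hlo h1)
  linarith

lemma gauss_pair {m t : ℝ} {u v lo hi : ℝ} (hu : 0 < u) (hv : 0 < v) (hlo : 0 < lo)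
    (h1 : lo ≤ u) (h2 : u ≤ hi) (h3 : lo ≤ v) (h4 : v ≤ hi) :
    |(gaussianReal m u.toNNReal (Set.Iic t)).toReal
      - (gaussianReal m v.toNNReal (Set.Iic t)).toReal| ≤ Real.sqrt (hi / lo) - 1 := by
  rcases le_total u v with h | h
  · exact gauss_pair_le hu h hlo h1 h4
  · rw [abs_sub_comm]
    exact gauss_pair_le hv h hlo h3 h2
variable {Ω : Type*} [MeasurableSpace Ω] {P : Measure Ω} [IsProbabilityMeasure P]

lemma meas_level {X : Ω → ℝ} (hm : Measurable X) (c : ℝ) : MeasurableSet {x | X x = c} :=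
  hm (measurableSet_singleton c)

lemma integral_comp_eq_sum {β : ℕ} {X : Ω → ℝ} (hm : Measurable X)
    (hval : ∀ x, ∃ k : ℕ, k ≤ β ∧ X x = k) (g : ℝ → ℝ) :
    ∫ x, g (X x) ∂P = ∑ k ∈ Finset.range (β+1), g k * (P {x | X x = (k:ℝ)}).toReal := by
  have hfun : (fun x => g (X x))
      = fun x => ∑ k ∈ Finset.range (β+1), ({y | X y = (k:ℝ)}).indicator (fun _ => g k) x := by
    funext x
    obtain ⟨k₀, hk₀, hXx⟩ := hval x
    rw [Finset.sum_eq_single_of_mem k₀ (Finset.mem_range.2 (Nat.lt_succ_of_le hk₀))]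
    · rw [Set.indicator_of_mem (by exact hXx) (fun _ => g k₀), hXx]
    · intro b _ hb
      apply Set.indicator_of_notMem
      simp only [Set.mem_setOf_eq, hXx]
      exact fun h => hb (Nat.cast_injective h).symm
  rw [hfun, integral_finset_sum]
  · refine Finset.sum_congr rfl fun k _ => ?_
    rw [integral_indicator_const (g k) (meas_level hm _)]
    rw [smul_eq_mul, mul_comm]
    rfl
  · exact fun k _ => (integrable_const (g (k:ℕ))).indicator (meas_level hm _)

lemma sum_p_one {β : ℕ} {X : Ω → ℝ} (hm : Measurable X)
    (hval : ∀ x, ∃ k : ℕ, k ≤ β ∧ X x = k) :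
    ∑ k ∈ Finset.range (β+1), (P {x | X x = (k:ℝ)}).toReal = 1 := by
  have := integral_comp_eq_sum (P := P) hm hval (fun _ => 1)
  simp only [one_mul, integral_const, measure_univ, probReal_univ, ENNReal.toReal_one, smul_eq_mul,
    mul_one] at this
  linarith

lemma mean_eq_half {β : ℕ} {X : Ω → ℝ} (hm : Measurable X)
    (hval : ∀ x, ∃ k : ℕ, k ≤ β ∧ X x = k)
    (hsym : ∀ s : ℝ, P {x | X x = s} = P {x | X x = β - s}) :
    ∫ x, X x ∂P = β / 2 := by
  have h1 : ∫ x, X x ∂P = ∑ k ∈ Finset.range (β+1), (k:ℝ) * (P {x | X x = (k:ℝ)}).toReal :=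
    integral_comp_eq_sum hm hval id
  have h2 := Finset.sum_range_reflect
    (fun k => (k:ℝ) * (P {x | X x = (k:ℝ)}).toReal) (β+1)
  have h3 : ∑ j ∈ Finset.range (β+1),
      ((β + 1 - 1 - j : ℕ):ℝ) * (P {x | X x = ((β + 1 - 1 - j : ℕ):ℝ)}).toReal
      = ∑ j ∈ Finset.range (β+1), ((β:ℝ) - j) * (P {x | X x = (j:ℝ)}).toReal := by
    refine Finset.sum_congr rfl fun j hj => ?_
    have hjβ : j ≤ β := Nat.lt_succ_iff.1 (Finset.mem_range.1 hj)
    have hc : ((β + 1 - 1 - j : ℕ):ℝ) = (β:ℝ) - j := by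
      rw [Nat.add_sub_cancel, Nat.cast_sub hjβ]
    rw [hc]
    congr 1
    rw [hsym (j:ℝ)]
  have h4 : ∑ j ∈ Finset.range (β+1), ((β:ℝ) - j) * (P {x | X x = (j:ℝ)}).toReal
      = ∫ x, X x ∂P := by
    rw [← h3, h2, ← h1]
  have hsum1 := sum_p_one (P := P) hm hval
  have h5 : ∑ j ∈ Finset.range (β+1), ((β:ℝ) - j) * (P {x | X x = (j:ℝ)}).toReal
      = (β:ℝ) * (∑ k ∈ Finset.range (β+1), (P {x | X x = (k:ℝ)}).toReal)
        - ∑ k ∈ Finset.range (β+1), (k:ℝ) * (P {x | X x = (k:ℝ)}).toReal := by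
    rw [Finset.mul_sum, ← Finset.sum_sub_distrib]
    exact Finset.sum_congr rfl fun j _ => by ring
  rw [h4, hsum1, ← h1] at h5
  linarith

lemma memLp_two {β : ℕ} {X : Ω → ℝ} (hm : Measurable X)
    (hval : ∀ x, ∃ k : ℕ, k ≤ β ∧ X x = k) : MemLp X 2 P := by
  refine MemLp.of_bound hm.aestronglyMeasurable (β:ℝ) (ae_of_all _ fun x => ?_)
  obtain ⟨k, hk, hx⟩ := hval x
  rw [hx, Real.norm_natCast]
  exact_mod_cast hk

lemma variance_eq {X : Ω → ℝ} (hX : MemLp X 2 P) :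
    variance X P = ∫ x, (X x)^2 ∂P - (∫ x, X x ∂P)^2 := by
  letI : MeasureSpace Ω := ⟨P⟩
  have h := ProbabilityTheory.variance_eq_sub (μ := P) (X := X) hX
  simpa [Pi.pow_apply] using h

lemma cdf_eq_sum {β : ℕ} {X : Ω → ℝ} (hm : Measurable X)
    (hval : ∀ x, ∃ k : ℕ, k ≤ β ∧ X x = k) (t : ℝ) :
    (P {x | X x ≤ t}).toReal = ∑ k ∈ (Finset.range (β+1)).filter (fun k : ℕ => (k:ℝ) ≤ t),
      (P {x | X x = (k:ℝ)}).toReal := by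
  have hset : {x | X x ≤ t} = ⋃ k ∈ (Finset.range (β+1)).filter (fun k : ℕ => (k:ℝ) ≤ t),
      {x | X x = (k:ℝ)} := by
    ext x
    simp only [Set.mem_setOf_eq, Set.mem_iUnion, Finset.mem_filter, Finset.mem_range,
      exists_prop]
    constructor
    · intro hx
      obtain ⟨k, hk, hXx⟩ := hval x
      exact ⟨k, ⟨Nat.lt_succ_of_le hk, hXx ▸ hx⟩, hXx⟩
    · rintro ⟨k, ⟨_, hkt⟩, hXx⟩
      rw [hXx]; exact hkt
  rw [hset, measure_biUnion_finset]
  · rw [ENNReal.toReal_sum (fun k _ => measure_ne_top _ _)]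
  · intro i _ j _ hij
    simp only [Function.onFun]
    rw [Set.disjoint_left]
    intro x hxi hxj
    simp only [Set.mem_setOf_eq] at hxi hxj
    exact hij (Nat.cast_injective ((hxi.symm.trans hxj : ((i:ℕ):ℝ) = j)))
  · exact fun k _ => meas_level hm _

lemma toReal_le_one' {α : Type*} [MeasurableSpace α] (μ : Measure α) [IsProbabilityMeasure μ]
    (s : Set α) : (μ s).toReal ≤ 1 := by
  rw [← ENNReal.toReal_one]
  exact ENNReal.toReal_mono ENNReal.one_ne_top prob_le_one

lemma abs_sub_le_one' {a b : ℝ} (ha0 : 0 ≤ a) (ha1 : a ≤ 1) (hb0 : 0 ≤ b) (hb1 : b ≤ 1) :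
    |a - b| ≤ 1 := abs_le.2 ⟨by linarith, by linarith⟩

end Aux

theorem stmt_3 {Ω : Type*} [MeasurableSpace Ω] (P : Measure Ω) [IsProbabilityMeasure P]
    {E : Type*} [Fintype E] [Nonempty E] (β : ℕ)
    (σ : Ω → ℝ) (ω : E → Ω → ℝ)
    (hmσ : Measurable σ) (hmω : ∀ e, Measurable (ω e))
    (hσval : ∀ x, ∃ k : ℕ, k ≤ β ∧ σ x = k)
    (hωval : ∀ e x, ∃ k : ℕ, k ≤ β ∧ ω e x = k)
    (hσsym : ∀ s : ℝ, P {x | σ x = s} = P {x | σ x = β - s})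
    (hωsym : ∀ e (s : ℝ), P {x | ω e x = s} = P {x | ω e x = β - s})
    (ℓ : E → ℝ) (hℓ : ∀ e, 0 < ℓ e) (L : ℝ) (hL : L = ∑ e, ℓ e)
    (hmix : ∀ s : ℝ, (P {x | σ x = s}).toReal
      = (1 / L) * ∑ e, ℓ e * (P {x | ω e x = s}).toReal)
    (ε : ℝ)
    (hε : ε = Real.sqrt
        ((Finset.univ.sup' Finset.univ_nonempty fun e => variance (ω e) P) /
         (Finset.univ.inf' Finset.univ_nonempty fun e => variance (ω e) P)) - 1)
    (hmin : 0 < Finset.univ.inf' Finset.univ_nonempty fun e => variance (ω e) P) :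
    dKSGauss P σ (gaussOf P σ)
      ≤ (Finset.univ.sup' Finset.univ_nonempty fun e => dKSGauss P (ω e) (gaussOf P (ω e))) + ε := by
  classical
  set vmin := Finset.univ.inf' Finset.univ_nonempty fun e => variance (ω e) P with hvmin
  set vmax := Finset.univ.sup' Finset.univ_nonempty fun e => variance (ω e) P with hvmax
  set M := Finset.univ.sup' Finset.univ_nonempty fun e => dKSGauss P (ω e) (gaussOf P (ω e))
    with hM
  have hLpos : 0 < L := hL ▸ Finset.sum_pos (fun e _ => hℓ e) Finset.univ_nonempty
  have hw : ∑ e, ℓ e / L = 1 := by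
    rw [← Finset.sum_div, ← hL, div_self hLpos.ne']
  have hwpos : ∀ e, 0 ≤ ℓ e / L := fun e => div_nonneg (hℓ e).le hLpos.le
  have hmeanσ : ∫ x, σ x ∂P = (β:ℝ) / 2 := mean_eq_half hmσ hσval hσsym
  have hmeanω : ∀ e, ∫ x, ω e x ∂P = (β:ℝ) / 2 := fun e =>
    mean_eq_half (hmω e) (hωval e) (hωsym e)
  have hLσ : MemLp σ 2 P := memLp_two hmσ hσval
  have hLω : ∀ e, MemLp (ω e) 2 P := fun e => memLp_two (hmω e) (hωval e)
  -- variance bounds for ω e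
  have hωlo : ∀ e, vmin ≤ variance (ω e) P := fun e => by
    rw [hvmin]; exact Finset.inf'_le (fun e => variance (ω e) P) (Finset.mem_univ e)
  have hωhi : ∀ e, variance (ω e) P ≤ vmax := fun e => by
    rw [hvmax]; exact Finset.le_sup' (fun e => variance (ω e) P) (Finset.mem_univ e)
  -- variance mixture
  have hm2σ : ∫ x, (σ x) ^ 2 ∂P
      = ∑ k ∈ Finset.range (β+1), ((k:ℕ):ℝ) ^ 2 * (P {x | σ x = ((k:ℕ):ℝ)}).toReal :=
    integral_comp_eq_sum hmσ hσval (fun y => y ^ 2)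
  have hsecond_e : ∀ e, ∑ k ∈ Finset.range (β+1),
      ((k:ℕ):ℝ) ^ 2 * (P {x | ω e x = ((k:ℕ):ℝ)}).toReal
      = variance (ω e) P + ((β:ℝ)/2) ^ 2 := by
    intro e
    have hv := variance_eq (hLω e)
    have h2 := integral_comp_eq_sum (P := P) (hmω e) (hωval e) (fun y => y ^ 2)
    rw [hmeanω e] at hv
    rw [← h2, hv]
    ring
  have hswap : ∑ k ∈ Finset.range (β+1), ((k:ℕ):ℝ) ^ 2 * (P {x | σ x = ((k:ℕ):ℝ)}).toReal
      = ∑ e, (ℓ e / L) * ∑ k ∈ Finset.range (β+1),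
          ((k:ℕ):ℝ) ^ 2 * (P {x | ω e x = ((k:ℕ):ℝ)}).toReal := by
    have hstep : ∀ k ∈ Finset.range (β+1),
        ((k:ℕ):ℝ) ^ 2 * (P {x | σ x = ((k:ℕ):ℝ)}).toReal
        = ∑ e, (ℓ e / L) * (((k:ℕ):ℝ) ^ 2 * (P {x | ω e x = ((k:ℕ):ℝ)}).toReal) := by
      intro k _
      rw [hmix ((k:ℕ):ℝ)]
      simp only [Finset.mul_sum]
      exact Finset.sum_congr rfl fun e _ => by ring
    rw [Finset.sum_congr rfl hstep, Finset.sum_comm]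
    exact Finset.sum_congr rfl fun e _ => by rw [Finset.mul_sum]
  have hvarσ : variance σ P = ∑ e, (ℓ e / L) * variance (ω e) P := by
    have hv := variance_eq hLσ
    rw [hmeanσ] at hv
    rw [hv, hm2σ, hswap, Finset.sum_congr rfl fun e _ => by rw [hsecond_e e]]
    have : ∑ e, (ℓ e / L) * (variance (ω e) P + ((β:ℝ)/2) ^ 2)
        = ∑ e, (ℓ e / L) * variance (ω e) P + (∑ e, ℓ e / L) * ((β:ℝ)/2) ^ 2 := by
      rw [Finset.sum_mul, ← Finset.sum_add_distrib]
      exact Finset.sum_congr rfl fun e _ => by ring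
    rw [this, hw]
    ring
  have hσlo : vmin ≤ variance σ P := by
    calc vmin = ∑ e, (ℓ e / L) * vmin := by rw [← Finset.sum_mul, hw, one_mul]
      _ ≤ ∑ e, (ℓ e / L) * variance (ω e) P :=
          Finset.sum_le_sum fun e _ => mul_le_mul_of_nonneg_left (hωlo e) (hwpos e)
      _ = variance σ P := hvarσ.symm
  have hσhi : variance σ P ≤ vmax := by
    calc variance σ P = ∑ e, (ℓ e / L) * variance (ω e) P := hvarσ
      _ ≤ ∑ e, (ℓ e / L) * vmax :=
          Finset.sum_le_sum fun e _ => mul_le_mul_of_nonneg_left (hωhi e) (hwpos e)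
      _ = vmax := by rw [← Finset.sum_mul, hw, one_mul]
  have hvarσpos : 0 < variance σ P := lt_of_lt_of_le hmin hσlo
  have hvarωpos : ∀ e, 0 < variance (ω e) P := fun e => lt_of_lt_of_le hmin (hωlo e)
  -- CDF mixture
  have hF : ∀ t : ℝ, (P {x | σ x ≤ t}).toReal
      = ∑ e, (ℓ e / L) * (P {x | ω e x ≤ t}).toReal := by
    intro t
    rw [cdf_eq_sum hmσ hσval t]
    have hstep : ∀ k ∈ (Finset.range (β+1)).filter (fun k : ℕ => (k:ℝ) ≤ t),
        (P {x | σ x = ((k:ℕ):ℝ)}).toReal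
        = ∑ e, (ℓ e / L) * (P {x | ω e x = ((k:ℕ):ℝ)}).toReal := by
      intro k _
      rw [hmix ((k:ℕ):ℝ)]
      simp only [Finset.mul_sum]
      exact Finset.sum_congr rfl fun e _ => by ring
    rw [Finset.sum_congr rfl hstep, Finset.sum_comm]
    exact Finset.sum_congr rfl fun e _ => by
      rw [cdf_eq_sum (hmω e) (hωval e) t, Finset.mul_sum]
  -- probability-measure instances for the Gaussians
  have hprobG : ∀ X : Ω → ℝ, IsProbabilityMeasure (gaussOf P X) := fun X => by
    unfold gaussOf; infer_instance
  -- main estimate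
  rw [dKSGauss]
  apply ciSup_le
  intro t
  -- Gaussian comparison
  have hG : ∀ e, |(gaussOf P (ω e) (Set.Iic t)).toReal - (gaussOf P σ (Set.Iic t)).toReal|
      ≤ ε := by
    intro e
    unfold gaussOf
    rw [hmeanσ, hmeanω e, hε]
    exact gauss_pair (hvarωpos e) hvarσpos hmin (hωlo e) (hωhi e) hσlo hσhi
  -- KS bound for each e
  have hKS : ∀ e, |(P {x | ω e x ≤ t}).toReal - (gaussOf P (ω e) (Set.Iic t)).toReal|
      ≤ dKSGauss P (ω e) (gaussOf P (ω e)) := by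
    intro e
    haveI := hprobG (ω e)
    have hbdd : BddAbove (Set.range fun s : ℝ =>
        |(P {x | ω e x ≤ s}).toReal - (gaussOf P (ω e) (Set.Iic s)).toReal|) := by
      refine ⟨1, ?_⟩
      rintro _ ⟨s, rfl⟩
      exact abs_sub_le_one' ENNReal.toReal_nonneg (toReal_le_one' P _)
        ENNReal.toReal_nonneg (toReal_le_one' _ _)
    rw [dKSGauss]
    exact le_ciSup hbdd t
  have hKSM : ∀ e, dKSGauss P (ω e) (gaussOf P (ω e)) ≤ M := fun e => by
    rw [hM]; exact Finset.le_sup' (fun e => dKSGauss P (ω e) (gaussOf P (ω e))) (Finset.mem_univ e)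
  -- put it together
  have hexp : (P {x | σ x ≤ t}).toReal - (gaussOf P σ (Set.Iic t)).toReal
      = ∑ e, (ℓ e / L) * ((P {x | ω e x ≤ t}).toReal - (gaussOf P σ (Set.Iic t)).toReal) := by
    calc (P {x | σ x ≤ t}).toReal - (gaussOf P σ (Set.Iic t)).toReal
        = ∑ e, (ℓ e / L) * (P {x | ω e x ≤ t}).toReal
          - (∑ e, ℓ e / L) * (gaussOf P σ (Set.Iic t)).toReal := by
          rw [hF t, hw, one_mul]
      _ = ∑ e, (ℓ e / L) * ((P {x | ω e x ≤ t}).toReal - (gaussOf P σ (Set.Iic t)).toReal) := by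
          rw [Finset.sum_mul, ← Finset.sum_sub_distrib]
          exact Finset.sum_congr rfl fun e _ => by ring
  rw [hexp]
  calc |∑ e, (ℓ e / L) * ((P {x | ω e x ≤ t}).toReal - (gaussOf P σ (Set.Iic t)).toReal)|
      ≤ ∑ e, |(ℓ e / L) * ((P {x | ω e x ≤ t}).toReal - (gaussOf P σ (Set.Iic t)).toReal)| :=
        Finset.abs_sum_le_sum_abs _ _
    _ ≤ ∑ e, (ℓ e / L) * (M + ε) := by
        refine Finset.sum_le_sum fun e _ => ?_
        rw [abs_mul, abs_of_nonneg (hwpos e)]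
        refine mul_le_mul_of_nonneg_left ?_ (hwpos e)
        calc |(P {x | ω e x ≤ t}).toReal - (gaussOf P σ (Set.Iic t)).toReal|
            ≤ |(P {x | ω e x ≤ t}).toReal - (gaussOf P (ω e) (Set.Iic t)).toReal|
              + |(gaussOf P (ω e) (Set.Iic t)).toReal - (gaussOf P σ (Set.Iic t)).toReal| :=
              abs_sub_le _ _ _
          _ ≤ M + ε := add_le_add ((hKS e).trans (hKSM e)) (hG e)
    _ = M + ε := by rw [← Finset.sum_mul, hw, one_mul]
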